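/- arXiv:1801.02541 — 11 statements merged into one kernel-verified Lean document; each statement's English description precedes it below -/
import Mathlib

section
/- Under the equal turnout hypothesis, the efficiency gap satisfies EG = S_m - 2·V_m, where S_m = S^A/n - 1/2 is party A's marginal seat share and V_m = V^A/V - 1/2 is party A's marginal vote share. -/
/-- Under the equal turnout hypothesis, the efficiency gap satisfies
`EG = S_m - 2 * V_m`. -/
theorem efficiency_gap_formula
    (n : ℕ) (hn : 0 < n) (V : ℝ) (hV : 0 < V)
    (VA VB : Fin n → ℝ)
    (hnonnegA : ∀ i, 0 ≤ VA i) (hnonnegB : ∀ i, 0 ≤ VB i)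
    (hturnout : ∀ i, VA i + VB i = V / n)
    (hnotie : ∀ i, VA i ≠ VB i) :
    let WA : ℝ := ∑ i, (if VB i < VA i then VA i - V / n / 2 else VA i)
    let WB : ℝ := ∑ i, (if VA i < VB i then VB i - V / n / 2 else VB i)
    let Sm : ℝ := ((Finset.univ.filter fun i => VB i < VA i).card : ℝ) / n - 1 / 2
    let Vm : ℝ := (∑ i, VA i) / V - 1 / 2
    (WB - WA) / V = Sm - 2 * Vm := by
  intro WA WB Sm Vm
  have hn' : (n : ℝ) ≠ 0 := Nat.cast_ne_zero.mpr hn.ne'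
  set c : ℝ := V / n / 2 with hc
  set k : ℕ := (Finset.univ.filter fun i => VB i < VA i).card with hk
  have hB : ∀ i, VB i = V / n - VA i := fun i => by
    have := hturnout i; linarith
  have key : WB - WA =
      ∑ i, (VB i - VA i + (2 * c * (if VB i < VA i then (1:ℝ) else 0) - c)) := by
    rw [show WB - WA = ∑ i, ((if VA i < VB i then VB i - c else VB i)
        - (if VB i < VA i then VA i - c else VA i)) from
      (Finset.sum_sub_distrib _ _).symm]
    refine Finset.sum_congr rfl fun i _ => ?_
    rcases (hnotie i).lt_or_gt with h | h
    · simp [h, not_lt.mpr h.le]; ring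
    · simp [h, not_lt.mpr h.le]; ring
  have hind : ∑ i, (2 * c * (if VB i < VA i then (1:ℝ) else 0) - c)
      = 2 * c * k - n * c := by
    rw [Finset.sum_sub_distrib, ← Finset.mul_sum, Finset.sum_boole]
    simp [hk]
  have hsumB : ∑ i, (VB i - VA i) = V - 2 * ∑ i, VA i := by
    have : ∑ i, (VB i - VA i) = ∑ i, (V / n - 2 * VA i) := by
      refine Finset.sum_congr rfl fun i _ => ?_
      rw [hB i]; ring
    rw [this, Finset.sum_sub_distrib, Finset.sum_const, ← Finset.mul_sum]
    simp [Finset.card_univ]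
    field_simp
  rw [key, Finset.sum_add_distrib, hind, hsumB]
  show (V - 2 * ∑ i, VA i + (2 * c * k - n * c)) / V
      = (k : ℝ) / n - 1 / 2 - 2 * ((∑ i, VA i) / V - 1 / 2)
  rw [hc]
  field_simp
  ring
end

section
/- Under the equal turnout hypothesis with no tied districts, the efficiency gap satisfies -1/2 ≤ EG ≤ 1/2. -/
/-- Under equal turnout with no tied districts, `-1/2 ≤ EG ≤ 1/2`. -/
theorem efficiency_gap_bounds
    (n : ℕ) (hn : 0 < n) (V : ℝ) (hV : 0 < V)
    (VA VB : Fin n → ℝ)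
    (hnonnegA : ∀ i, 0 ≤ VA i) (hnonnegB : ∀ i, 0 ≤ VB i)
    (hturnout : ∀ i, VA i + VB i = V / n)
    (hnotie : ∀ i, VA i ≠ VB i) :
    let WA : ℝ := ∑ i, (if VB i < VA i then VA i - V / n / 2 else VA i)
    let WB : ℝ := ∑ i, (if VA i < VB i then VB i - V / n / 2 else VB i)
    let EG : ℝ := (WB - WA) / V
    EG ∈ Set.Icc (-(1 / 2) : ℝ) (1 / 2) := by
  intro WA WB EG
  have hn' : (0:ℝ) < (n:ℝ) := by exact_mod_cast hn
  have habs : |WB - WA| ≤ V / 2 := by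
    have h1 : WB - WA = ∑ i, ((if VA i < VB i then VB i - V / n / 2 else VB i)
        - (if VB i < VA i then VA i - V / n / 2 else VA i)) := by
      simp [WA, WB, Finset.sum_sub_distrib]
    rw [h1]
    calc |∑ i, ((if VA i < VB i then VB i - V / n / 2 else VB i)
          - (if VB i < VA i then VA i - V / n / 2 else VA i))|
        ≤ ∑ i, |(if VA i < VB i then VB i - V / n / 2 else VB i)
          - (if VB i < VA i then VA i - V / n / 2 else VA i)| :=
          Finset.abs_sum_le_sum_abs _ _
      _ ≤ ∑ _i : Fin n, V / n / 2 := by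
          apply Finset.sum_le_sum
          intro i _
          have ht := hturnout i
          have hA := hnonnegA i
          have hB := hnonnegB i
          rcases lt_trichotomy (VA i) (VB i) with h | h | h
          · rw [if_pos h, if_neg (not_lt.mpr (le_of_lt h))]
            rw [abs_le]; constructor <;> nlinarith
          · exact absurd h (hnotie i)
          · rw [if_neg (not_lt.mpr (le_of_lt h)), if_pos h]
            rw [abs_le]; constructor <;> nlinarith
      _ = V / 2 := by
          rw [Finset.sum_const, Finset.card_univ, Fintype.card_fin, nsmul_eq_mul]
          field_simp
  have : |EG| ≤ 1 / 2 := by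
    have : |EG| = |WB - WA| / V := by
      simp [EG, abs_div, abs_of_pos hV]
    rw [this, div_le_iff₀ hV]
    nlinarith
  have h2 := abs_le.mp this
  exact ⟨h2.1, h2.2⟩
end

section
/- The efficiency gap equals the seat-share-weighted difference of average competitiveness deviations: EG = (S^B/n)·(C^B - 1/2) - (S^A/n)·(C^A - 1/2), where C^P is the average of C_i over districts won by party P (assuming each party wins at least one district). -/
/-- Cover's formula: the efficiency gap is the seat-share-weighted difference
of the average competitiveness deviations from 1/2. -/
theorem efficiency_gap_eq_weighted_differential_competitiveness
    (n : ℕ) (hn : 0 < n) (V : ℝ) (hV : 0 < V)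
    (VA VB : Fin n → ℝ)
    (hnonnegA : ∀ i, 0 ≤ VA i) (hnonnegB : ∀ i, 0 ≤ VB i)
    (hturnout : ∀ i, VA i + VB i = V / n)
    (hnotie : ∀ i, VA i ≠ VB i)
    (hAwins : (Finset.univ.filter fun i => VB i < VA i).Nonempty)
    (hBwins : (Finset.univ.filter fun i => VA i < VB i).Nonempty) :
    let WA : ℝ := ∑ i, (if VB i < VA i then VA i - V / n / 2 else VA i)
    let WB : ℝ := ∑ i, (if VA i < VB i then VB i - V / n / 2 else VB i)
    let EG : ℝ := (WB - WA) / V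
    let C : Fin n → ℝ := fun i => |VA i - VB i| / (V / n)
    let SA : ℝ := ((Finset.univ.filter fun i => VB i < VA i).card : ℝ)
    let SB : ℝ := ((Finset.univ.filter fun i => VA i < VB i).card : ℝ)
    let CA : ℝ := (∑ i ∈ Finset.univ.filter fun i => VB i < VA i, C i) / SA
    let CB : ℝ := (∑ i ∈ Finset.univ.filter fun i => VA i < VB i, C i) / SB
    EG = (SB / n) * (CB - 1 / 2) - (SA / n) * (CA - 1 / 2) := by
  intro WA WB EG C SA SB CA CB
  set A := Finset.univ.filter (fun i => VB i < VA i) with hAdef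
  set B := Finset.univ.filter (fun i => VA i < VB i) with hBdef
  have hn' : (n : ℝ) ≠ 0 := Nat.cast_ne_zero.mpr hn.ne'
  have hv : (0:ℝ) < V / n := div_pos hV (by positivity)
  have hcomp : Finset.univ.filter (fun i => ¬ VB i < VA i) = B := by
    ext i
    simp only [Finset.mem_filter, Finset.mem_univ, true_and, hBdef]
    constructor
    · intro h; exact lt_of_le_of_ne (not_lt.mp h) (hnotie i)
    · intro h; exact not_lt.mpr h.le
  have hcomp' : Finset.univ.filter (fun i => ¬ VA i < VB i) = A := by
    ext i
    simp only [Finset.mem_filter, Finset.mem_univ, true_and, hAdef]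
    constructor
    · intro h; exact lt_of_le_of_ne (not_lt.mp h) (hnotie i).symm
    · intro h; exact not_lt.mpr h.le
  have hSA : SA ≠ 0 := by
    show (A.card : ℝ) ≠ 0
    exact_mod_cast (Finset.card_pos.mpr hAwins).ne'
  have hSB : SB ≠ 0 := by
    show (B.card : ℝ) ≠ 0
    exact_mod_cast (Finset.card_pos.mpr hBwins).ne'
  have hWA : WA = ∑ i ∈ A, (VA i - V / n / 2) + ∑ i ∈ B, VA i := by
    show (∑ i, (if VB i < VA i then VA i - V / n / 2 else VA i)) = _
    rw [← Finset.sum_filter_add_sum_filter_not Finset.univ (fun i => VB i < VA i), hcomp]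
    congr 1
    · exact Finset.sum_congr rfl fun i hi => if_pos (Finset.mem_filter.mp hi).2
    · exact Finset.sum_congr rfl fun i hi =>
        if_neg (not_lt.mpr (Finset.mem_filter.mp hi).2.le)
  have hWB : WB = ∑ i ∈ B, (VB i - V / n / 2) + ∑ i ∈ A, VB i := by
    show (∑ i, (if VA i < VB i then VB i - V / n / 2 else VB i)) = _
    rw [← Finset.sum_filter_add_sum_filter_not Finset.univ (fun i => VA i < VB i), hcomp']
    congr 1
    · exact Finset.sum_congr rfl fun i hi => if_pos (Finset.mem_filter.mp hi).2
    · exact Finset.sum_congr rfl fun i hi =>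
        if_neg (not_lt.mpr (Finset.mem_filter.mp hi).2.le)
  have hTA : ∑ i ∈ A, (VA i - VB i) = (∑ i ∈ A, C i) * (V / n) := by
    rw [Finset.sum_mul]
    refine Finset.sum_congr rfl fun i hi => ?_
    have hi' : VB i < VA i := (Finset.mem_filter.mp hi).2
    show VA i - VB i = |VA i - VB i| / (V / n) * (V / n)
    rw [div_mul_cancel₀ _ hv.ne', abs_of_pos (sub_pos.mpr hi')]
  have hTB : ∑ i ∈ B, (VB i - VA i) = (∑ i ∈ B, C i) * (V / n) := by
    rw [Finset.sum_mul]
    refine Finset.sum_congr rfl fun i hi => ?_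
    have hi' : VA i < VB i := (Finset.mem_filter.mp hi).2
    show VB i - VA i = |VA i - VB i| / (V / n) * (V / n)
    rw [div_mul_cancel₀ _ hv.ne', abs_sub_comm, abs_of_pos (sub_pos.mpr hi')]
  have hTA' : ∑ i ∈ A, VA i - ∑ i ∈ A, VB i = (∑ i ∈ A, C i) * (V / n) := by
    rw [← Finset.sum_sub_distrib]; exact hTA
  have hTB' : ∑ i ∈ B, VB i - ∑ i ∈ B, VA i = (∑ i ∈ B, C i) * (V / n) := by
    rw [← Finset.sum_sub_distrib]; exact hTB
  have key : WB - WA = (V / n) * ((∑ i ∈ B, C i) - SB / 2)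
      - (V / n) * ((∑ i ∈ A, C i) - SA / 2) := by
    rw [hWA, hWB, Finset.sum_sub_distrib, Finset.sum_sub_distrib,
      Finset.sum_const, Finset.sum_const, nsmul_eq_mul, nsmul_eq_mul]
    show _ = (V / n) * ((∑ i ∈ B, C i) - (B.card : ℝ) / 2)
      - (V / n) * ((∑ i ∈ A, C i) - (A.card : ℝ) / 2)
    linear_combination hTB' - hTA'
  show (WB - WA) / V = SB / n * (CB - 1 / 2) - SA / n * (CA - 1 / 2)
  rw [key]
  show _ = SB / n * ((∑ i ∈ B, C i) / SB - 1 / 2) - SA / n * ((∑ i ∈ A, C i) / SA - 1 / 2)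
  field_simp
end

section
/- If both parties win the same number of seats (S_m = 0), then EG = (1/2)(C^B - C^A), i.e., the efficiency gap is half the difference of average competitiveness of districts won by each party. -/
/-- If both parties win the same number of seats, the efficiency gap is half
the difference of the average competitiveness of the districts each won. -/
theorem efficiency_gap_eq_half_competitiveness_gap
    (n : ℕ) (hn : 0 < n) (V : ℝ) (hV : 0 < V)
    (VA VB : Fin n → ℝ)
    (hnonnegA : ∀ i, 0 ≤ VA i) (hnonnegB : ∀ i, 0 ≤ VB i)
    (hturnout : ∀ i, VA i + VB i = V / n)
    (hnotie : ∀ i, VA i ≠ VB i)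
    (hAwins : (Finset.univ.filter fun i => VB i < VA i).Nonempty)
    (hBwins : (Finset.univ.filter fun i => VA i < VB i).Nonempty)
    (hSm : (Finset.univ.filter fun i => VB i < VA i).card
         = (Finset.univ.filter fun i => VA i < VB i).card) :
    let WA : ℝ := ∑ i, (if VB i < VA i then VA i - V / n / 2 else VA i)
    let WB : ℝ := ∑ i, (if VA i < VB i then VB i - V / n / 2 else VB i)
    let EG : ℝ := (WB - WA) / V
    let C : Fin n → ℝ := fun i => |VA i - VB i| / (V / n)
    let CA : ℝ := (∑ i ∈ Finset.univ.filter fun i => VB i < VA i, C i)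
                  / ((Finset.univ.filter fun i => VB i < VA i).card : ℝ)
    let CB : ℝ := (∑ i ∈ Finset.univ.filter fun i => VA i < VB i, C i)
                  / ((Finset.univ.filter fun i => VA i < VB i).card : ℝ)
    EG = (1 / 2) * (CB - CA) := by
  intro WA WB EG C CA CB
  set SA := Finset.univ.filter fun i => VB i < VA i with hSAdef
  set SB := Finset.univ.filter fun i => VA i < VB i with hSBdef
  have hSBneg : SB = Finset.univ.filter fun i => ¬ VB i < VA i := by
    apply Finset.filter_congr
    intro i _
    have h := hnotie i
    constructor
    · intro h1; exact not_lt_of_gt h1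
    · intro h1; exact lt_of_le_of_ne (not_lt.mp h1) h
  have hcards : SA.card + SB.card = n := by
    rw [hSAdef, hSBneg]
    rw [Finset.card_filter_add_card_filter_not]
    simp
  have hm : 0 < SA.card := Finset.card_pos.mpr hAwins
  have hn2 : (n : ℝ) = 2 * SA.card := by
    have h : n = SA.card + SA.card := by omega
    have h' : (n:ℝ) = (SA.card:ℝ) + SA.card := by exact_mod_cast h
    linarith
  have hdisj : Disjoint SA SB := by
    rw [Finset.disjoint_left]
    intro i hi hi'
    simp only [hSAdef, hSBdef, Finset.mem_filter] at hi hi'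
    exact absurd hi'.2 (not_lt_of_gt hi.2)
  have hunion : SA ∪ SB = Finset.univ := by
    ext i
    simp only [hSAdef, hSBdef, Finset.mem_union, Finset.mem_filter, Finset.mem_univ,
      true_and, iff_true]
    rcases (hnotie i).lt_or_gt with h | h
    · right; exact h
    · left; exact h
  -- WA and WB simplifications
  set c : ℝ := V / n / 2 with hc
  have hWA : WA = (∑ i, VA i) - SA.card * c := by
    show (∑ i, (if VB i < VA i then VA i - c else VA i)) = _
    have : ∀ i : Fin n, (if VB i < VA i then VA i - c else VA i)
        = VA i - (if VB i < VA i then c else 0) := by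
      intro i; split <;> simp
    rw [Finset.sum_congr rfl fun i _ => this i, Finset.sum_sub_distrib,
      ← Finset.sum_filter, Finset.sum_const, nsmul_eq_mul]
  have hWB : WB = (∑ i, VB i) - SB.card * c := by
    show (∑ i, (if VA i < VB i then VB i - c else VB i)) = _
    have : ∀ i : Fin n, (if VA i < VB i then VB i - c else VB i)
        = VB i - (if VA i < VB i then c else 0) := by
      intro i; split <;> simp
    rw [Finset.sum_congr rfl fun i _ => this i, Finset.sum_sub_distrib,
      ← Finset.sum_filter, Finset.sum_const, nsmul_eq_mul]
  have hdiff : WB - WA = (∑ i ∈ SB, |VA i - VB i|) - ∑ i ∈ SA, |VA i - VB i| := by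
    rw [hWA, hWB]
    have h1 : (∑ i, VB i) - (∑ i, VA i) = ∑ i : Fin n, (VB i - VA i) := by
      rw [Finset.sum_sub_distrib]
    have h2 : (∑ i : Fin n, (VB i - VA i))
        = (∑ i ∈ SA, (VB i - VA i)) + ∑ i ∈ SB, (VB i - VA i) := by
      rw [← Finset.sum_union hdisj, hunion]
    have h3 : ∑ i ∈ SA, (VB i - VA i) = -∑ i ∈ SA, |VA i - VB i| := by
      rw [← Finset.sum_neg_distrib]
      apply Finset.sum_congr rfl
      intro i hi
      simp only [hSAdef, Finset.mem_filter] at hi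
      rw [abs_of_pos (by linarith [hi.2])]; ring
    have h4 : ∑ i ∈ SB, (VB i - VA i) = ∑ i ∈ SB, |VA i - VB i| := by
      apply Finset.sum_congr rfl
      intro i hi
      simp only [hSBdef, Finset.mem_filter] at hi
      rw [abs_of_neg (by linarith [hi.2])]; ring
    have hcard' : (SA.card : ℝ) = SB.card := by exact_mod_cast hSm
    have h5 := h2
    rw [h3, h4] at h5
    rw [hcard']
    linarith [h1, h5]
  -- now the RHS
  have hVn : (0 : ℝ) < V / n := by positivity
  have hCA : CA = (∑ i ∈ SA, |VA i - VB i|) / (V / n) / SA.card := by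
    show (∑ i ∈ SA, |VA i - VB i| / (V / n)) / (SA.card : ℝ) = _
    rw [← Finset.sum_div]
  have hCB : CB = (∑ i ∈ SB, |VA i - VB i|) / (V / n) / SB.card := by
    show (∑ i ∈ SB, |VA i - VB i| / (V / n)) / (SB.card : ℝ) = _
    rw [← Finset.sum_div]
  show (WB - WA) / V = (1 / 2) * (CB - CA)
  rw [hdiff, hCA, hCB]
  have hcard' : (SB.card : ℝ) = SA.card := by exact_mod_cast hSm.symm
  rw [hcard']
  have hmR : (0 : ℝ) < (SA.card : ℝ) := by exact_mod_cast hm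
  have hnR : (0 : ℝ) < (n : ℝ) := by exact_mod_cast hn
  field_simp
  rw [hn2]
  ring
end

section
/- For the weighted efficiency gap with excess-vote weight λ > 0, under equal turnout, EG_λ = S_m - (1+λ)·V_m. -/
/-- Nagle's weighted efficiency gap formula: under equal turnout,
`EG_λ = S_m - (1 + λ) * V_m`. -/
theorem weighted_efficiency_gap_formula
    (n : ℕ) (hn : 0 < n) (V : ℝ) (hV : 0 < V) (lam : ℝ) (hlam : 0 < lam)
    (VA VB : Fin n → ℝ)
    (hnonnegA : ∀ i, 0 ≤ VA i) (hnonnegB : ∀ i, 0 ≤ VB i)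
    (hturnout : ∀ i, VA i + VB i = V / n)
    (hnotie : ∀ i, VA i ≠ VB i) :
    let WA : ℝ := ∑ i, (if VB i < VA i then lam * (VA i - V / n / 2) else VA i)
    let WB : ℝ := ∑ i, (if VA i < VB i then lam * (VB i - V / n / 2) else VB i)
    let Sm : ℝ := ((Finset.univ.filter fun i => VB i < VA i).card : ℝ) / n - 1 / 2
    let Vm : ℝ := (∑ i, VA i) / V - 1 / 2
    (WB - WA) / V = Sm - (1 + lam) * Vm := by
  intro WA WB Sm Vm
  have hn' : (n : ℝ) ≠ 0 := Nat.cast_ne_zero.mpr hn.ne'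
  have key : WB - WA = ∑ i, (-(1 + lam) * VA i + lam * (V / n / 2)
      + (if VB i < VA i then V / n else 0)) := by
    show (∑ i, _) - (∑ i, _) = _
    rw [← Finset.sum_sub_distrib]
    apply Finset.sum_congr rfl
    intro i _
    have h := hturnout i
    have hB : VB i = V / n - VA i := by linarith
    rcases lt_or_gt_of_ne (hnotie i) with h1 | h1
    · rw [if_pos h1, if_neg (not_lt.mpr h1.le), if_neg (not_lt.mpr h1.le), hB]
      ring
    · rw [if_neg (not_lt.mpr h1.le), if_pos h1, if_pos h1, hB]
      ring
  have hcard : ∑ i : Fin n, (if VB i < VA i then V / n else 0)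
      = ((Finset.univ.filter fun i => VB i < VA i).card : ℝ) * (V / n) := by
    rw [← Finset.sum_filter, Finset.sum_const, nsmul_eq_mul]
  rw [key, Finset.sum_add_distrib, Finset.sum_add_distrib, hcard,
    Finset.sum_const, nsmul_eq_mul, Finset.card_univ, Fintype.card_fin, ← Finset.mul_sum]
  show _ = Sm - (1 + lam) * Vm
  simp only [Sm, Vm]
  field_simp
  ring
end

section
/- The weighted waste-gap in district i satisfies (W_i^B(λ) - W_i^A(λ))/V_i = ((λ+1)/2)·C_i - 1/2 if B wins district i, and = 1/2 - ((λ+1)/2)·C_i if A wins district i. Consequently EG_λ = (S^B/n)·(((λ+1)/2)·C^B - 1/2) - (S^A/n)·(((λ+1)/2)·C^A - 1/2) when each party wins at least one district. -/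
/-- The weighted waste-gap in a district is a linear function of its
competitiveness, and consequently the weighted efficiency gap equals the
seat-share-weighted differential competitiveness (Cover). -/
theorem weighted_efficiency_gap_differential_competitiveness
    (n : ℕ) (hn : 0 < n) (V : ℝ) (hV : 0 < V) (lam : ℝ) (hlam : 0 < lam)
    (VA VB : Fin n → ℝ)
    (hnonnegA : ∀ i, 0 ≤ VA i) (hnonnegB : ∀ i, 0 ≤ VB i)
    (hturnout : ∀ i, VA i + VB i = V / n)
    (hnotie : ∀ i, VA i ≠ VB i)
    (hAwins : (Finset.univ.filter fun i => VB i < VA i).Nonempty)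
    (hBwins : (Finset.univ.filter fun i => VA i < VB i).Nonempty) :
    let WiA : Fin n → ℝ := fun i => if VB i < VA i then lam * (VA i - V / n / 2) else VA i
    let WiB : Fin n → ℝ := fun i => if VA i < VB i then lam * (VB i - V / n / 2) else VB i
    let EG : ℝ := ((∑ i, WiB i) - (∑ i, WiA i)) / V
    let C : Fin n → ℝ := fun i => |VA i - VB i| / (V / n)
    let SA : ℝ := ((Finset.univ.filter fun i => VB i < VA i).card : ℝ)
    let SB : ℝ := ((Finset.univ.filter fun i => VA i < VB i).card : ℝ)
    let CA : ℝ := (∑ i ∈ Finset.univ.filter fun i => VB i < VA i, C i) / SA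
    let CB : ℝ := (∑ i ∈ Finset.univ.filter fun i => VA i < VB i, C i) / SB
    (∀ i, VA i < VB i → (WiB i - WiA i) / (V / n) = (lam + 1) / 2 * C i - 1 / 2) ∧
    (∀ i, VB i < VA i → (WiB i - WiA i) / (V / n) = 1 / 2 - (lam + 1) / 2 * C i) ∧
    EG = (SB / n) * ((lam + 1) / 2 * CB - 1 / 2)
       - (SA / n) * ((lam + 1) / 2 * CA - 1 / 2) := by
  intro WiA WiB EG C SA SB CA CB
  have hnpos : (0:ℝ) < n := by exact_mod_cast hn
  have hnne : (n:ℝ) ≠ 0 := ne_of_gt hnpos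
  have hv : (0:ℝ) < V / n := div_pos hV hnpos
  have hvne : (V / n : ℝ) ≠ 0 := ne_of_gt hv
  have hVne : V ≠ 0 := ne_of_gt hV
  -- per-district, B wins
  have hBfact : ∀ i, VA i < VB i →
      WiB i - WiA i = (V / n) * ((lam + 1) / 2 * C i - 1 / 2) := by
    intro i h
    have hA' : ¬ VB i < VA i := not_lt.mpr h.le
    have ht := hturnout i
    simp only [WiA, WiB, C, if_pos h, if_neg hA',
      abs_of_neg (sub_neg.mpr h)]
    have e : V / ↑n * ((lam + 1) / 2 * (-(VA i - VB i) / (V / ↑n)) - 1 / 2)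
        = (lam + 1) / 2 * (VB i - VA i) - (V / ↑n) / 2 := by
      field_simp; ring
    rw [e]
    linear_combination ((lam - 1) / 2) * ht
  have hAfact : ∀ i, VB i < VA i →
      WiB i - WiA i = (V / n) * (1 / 2 - (lam + 1) / 2 * C i) := by
    intro i h
    have hB' : ¬ VA i < VB i := not_lt.mpr h.le
    have ht := hturnout i
    simp only [WiA, WiB, C, if_pos h, if_neg hB',
      abs_of_pos (sub_pos.mpr h)]
    have e : V / ↑n * (1 / 2 - (lam + 1) / 2 * ((VA i - VB i) / (V / ↑n)))
        = (V / ↑n) / 2 - (lam + 1) / 2 * (VA i - VB i) := by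
      field_simp
    rw [e]
    linear_combination ((1 - lam) / 2) * ht
  refine ⟨?_, ?_, ?_⟩
  · intro i h
    rw [hBfact i h, mul_comm, mul_div_assoc, div_self hvne, mul_one]
  · intro i h
    rw [hAfact i h, mul_comm, mul_div_assoc, div_self hvne, mul_one]
  -- main identity
  have hsplit : (∑ i, (WiB i - WiA i)) =
      (∑ i ∈ Finset.univ.filter fun i => VA i < VB i, (WiB i - WiA i)) +
      (∑ i ∈ Finset.univ.filter fun i => VB i < VA i, (WiB i - WiA i)) := by
    rw [← Finset.sum_filter_add_sum_filter_not Finset.univ (fun i => VA i < VB i)]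
    congr 1
    apply Finset.sum_congr _ (fun _ _ => rfl)
    apply Finset.filter_congr
    intro i _
    constructor
    · intro h'
      exact lt_of_le_of_ne (not_lt.mp h') (fun e => hnotie i e.symm)
    · intro h'
      exact not_lt.mpr h'.le
  have hsumB : (∑ i ∈ Finset.univ.filter fun i => VA i < VB i, (WiB i - WiA i)) =
      (V / n) * ((lam + 1) / 2 * (SB * CB) - SB / 2) := by
    have hSBne : SB ≠ 0 := by
      simp only [SB]
      exact_mod_cast Finset.card_ne_zero_of_mem hBwins.choose_spec
    have h1 : SB * CB = ∑ i ∈ Finset.univ.filter fun i => VA i < VB i, C i := by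
      simp only [CB]; field_simp
    rw [Finset.sum_congr rfl (fun i hi => hBfact i (Finset.mem_filter.mp hi).2)]
    rw [← Finset.mul_sum, h1]
    rw [Finset.sum_sub_distrib, ← Finset.mul_sum, Finset.sum_const]
    simp only [SB, nsmul_eq_mul, mul_one]
    ring
  have hsumA : (∑ i ∈ Finset.univ.filter fun i => VB i < VA i, (WiB i - WiA i)) =
      (V / n) * (SA / 2 - (lam + 1) / 2 * (SA * CA)) := by
    have hSAne : SA ≠ 0 := by
      simp only [SA]
      exact_mod_cast Finset.card_ne_zero_of_mem hAwins.choose_spec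
    have h1 : SA * CA = ∑ i ∈ Finset.univ.filter fun i => VB i < VA i, C i := by
      simp only [CA]; field_simp
    rw [Finset.sum_congr rfl (fun i hi => hAfact i (Finset.mem_filter.mp hi).2)]
    rw [← Finset.mul_sum, h1]
    rw [Finset.sum_sub_distrib, ← Finset.mul_sum, Finset.sum_const]
    simp only [SA, nsmul_eq_mul, mul_one]
    ring
  have hEG : EG = (∑ i, (WiB i - WiA i)) / V := by
    simp only [EG, Finset.sum_sub_distrib]
  rw [hEG, hsplit, hsumB, hsumA]
  field_simp
  ring
end

section
/- Under equal turnout, the relative efficiency gap with λ = 1 satisfies REG_1 = (1/2)·(S_m - V_m)/((1/2 + V_m)(1/2 - V_m)), provided both parties receive at least one vote. -/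
/-- Under equal turnout, the relative efficiency gap with λ = 1 satisfies
`REG_1 = (1/2) * (S_m - V_m) / ((1/2 + V_m) * (1/2 - V_m))`. -/
theorem relative_efficiency_gap_one_formula
    (n : ℕ) (hn : 0 < n) (V : ℝ) (hV : 0 < V)
    (VA VB : Fin n → ℝ)
    (hnonnegA : ∀ i, 0 ≤ VA i) (hnonnegB : ∀ i, 0 ≤ VB i)
    (hturnout : ∀ i, VA i + VB i = V / n)
    (hnotie : ∀ i, VA i ≠ VB i)
    (hApos : 0 < ∑ i, VA i) (hBpos : 0 < ∑ i, VB i) :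
    let WA : ℝ := ∑ i, (if VB i < VA i then VA i - V / n / 2 else VA i)
    let WB : ℝ := ∑ i, (if VA i < VB i then VB i - V / n / 2 else VB i)
    let REG : ℝ := WB / (∑ i, VB i) - WA / (∑ i, VA i)
    let Sm : ℝ := ((Finset.univ.filter fun i => VB i < VA i).card : ℝ) / n - 1 / 2
    let Vm : ℝ := (∑ i, VA i) / V - 1 / 2
    REG = (1 / 2) * ((Sm - Vm) / ((1 / 2 + Vm) * (1 / 2 - Vm))) := by
  intro WA WB REG Sm Vm
  have hn' : (n : ℝ) ≠ 0 := Nat.cast_ne_zero.mpr hn.ne'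
  set a : ℝ := ∑ i, VA i with ha
  set b : ℝ := ∑ i, VB i with hb
  set SA : ℕ := (Finset.univ.filter fun i => VB i < VA i).card with hSA
  have hsum : a + b = V := by
    rw [ha, hb, ← Finset.sum_add_distrib]
    simp only [hturnout]
    rw [Finset.sum_const, Finset.card_univ, Fintype.card_fin, nsmul_eq_mul]
    field_simp
  have hWA : WA = a - SA * (V / n / 2) := by
    show (∑ i, (if VB i < VA i then VA i - V / n / 2 else VA i)) = _
    have h1 : ∀ i ∈ Finset.univ, (if VB i < VA i then VA i - V / n / 2 else VA i)
        = VA i - (if VB i < VA i then V / n / 2 else 0) := by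
      intro i _; split <;> ring
    rw [Finset.sum_congr rfl h1, Finset.sum_sub_distrib, ← Finset.sum_filter,
      Finset.sum_const, nsmul_eq_mul]
  have hcard : ((Finset.univ.filter fun i => VA i < VB i).card : ℝ) = n - SA := by
    have hco : (Finset.univ.filter fun i => VA i < VB i)
        = Finset.univ.filter fun i => ¬ (VB i < VA i) := by
      apply Finset.filter_congr
      intro i _
      constructor
      · intro h; exact not_lt.mpr h.le
      · intro h; exact lt_of_le_of_ne (not_lt.mp h) (hnotie i)
    have := Finset.card_filter_add_card_filter_not
      (s := (Finset.univ : Finset (Fin n))) (p := fun i => VB i < VA i)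
    rw [Finset.card_univ, Fintype.card_fin] at this
    rw [hco]
    have h2 : (Finset.univ.filter fun i => ¬ VB i < VA i).card = n - SA := by omega
    rw [h2, Nat.cast_sub]
    omega
  have hWB : WB = b - ((n : ℝ) - SA) * (V / n / 2) := by
    show (∑ i, (if VA i < VB i then VB i - V / n / 2 else VB i)) = _
    have h1 : ∀ i ∈ Finset.univ, (if VA i < VB i then VB i - V / n / 2 else VB i)
        = VB i - (if VA i < VB i then V / n / 2 else 0) := by
      intro i _; split <;> ring
    rw [Finset.sum_congr rfl h1, Finset.sum_sub_distrib, ← Finset.sum_filter,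
      Finset.sum_const, nsmul_eq_mul, hcard]
  have hbV : b = V - a := by linarith
  show WB / b - WA / a = (1 / 2) * ((Sm - Vm) / ((1 / 2 + Vm) * (1 / 2 - Vm)))
  have hVm1 : (1 / 2 + Vm) = a / V := by
    show (1 / 2 + (a / V - 1 / 2)) = a / V; ring
  have hVm2 : (1 / 2 - Vm) = b / V := by
    show (1 / 2 - (a / V - 1 / 2)) = b / V
    rw [hbV]; field_simp; ring
  rw [hWA, hWB, hVm1, hVm2, hbV]
  show _ = (1 / 2) * ((((SA : ℝ) / n - 1 / 2) - (a / V - 1 / 2)) / (a / V * ((V - a) / V)))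
  have hb' : V - a ≠ 0 := by rw [← hbV]; exact hBpos.ne'
  field_simp
  ring
end

section
/- Under equal turnout, REG_1 = 0 if and only if S_m = V_m; that is, the λ = 1 relative efficiency gap vanishes exactly when seats are proportional to votes. -/
/-- Under equal turnout, `REG_1 = 0` if and only if `S_m = V_m`: the λ = 1
relative efficiency gap vanishes exactly at proportionality. -/
theorem relative_efficiency_gap_one_vanishes_iff_proportional
    (n : ℕ) (hn : 0 < n) (V : ℝ) (hV : 0 < V)
    (VA VB : Fin n → ℝ)
    (hnonnegA : ∀ i, 0 ≤ VA i) (hnonnegB : ∀ i, 0 ≤ VB i)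
    (hturnout : ∀ i, VA i + VB i = V / n)
    (hnotie : ∀ i, VA i ≠ VB i)
    (hApos : 0 < ∑ i, VA i) (hBpos : 0 < ∑ i, VB i) :
    let WA : ℝ := ∑ i, (if VB i < VA i then VA i - V / n / 2 else VA i)
    let WB : ℝ := ∑ i, (if VA i < VB i then VB i - V / n / 2 else VB i)
    let REG : ℝ := WB / (∑ i, VB i) - WA / (∑ i, VA i)
    let Sm : ℝ := ((Finset.univ.filter fun i => VB i < VA i).card : ℝ) / n - 1 / 2
    let Vm : ℝ := (∑ i, VA i) / V - 1 / 2
    (REG = 0 ↔ Sm = Vm) := by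
  intro WA WB REG Sm Vm
  set a : ℝ := ∑ i, VA i with ha
  set b : ℝ := ∑ i, VB i with hb
  set c : ℝ := V / n / 2 with hc
  set s : ℕ := (Finset.univ.filter fun i => VB i < VA i).card with hs
  have hnR : (0:ℝ) < n := Nat.cast_pos.mpr hn
  have hcpos : 0 < c := by
    rw [hc]; positivity
  -- total votes
  have hab : a + b = V := by
    rw [ha, hb, ← Finset.sum_add_distrib]
    simp only [hturnout]
    rw [Finset.sum_const, Finset.card_univ, Fintype.card_fin, nsmul_eq_mul]
    field_simp
  -- card of B-wins
  have hcards : s + (Finset.univ.filter fun i => VA i < VB i).card = n := by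
    have : (Finset.univ.filter fun i => VA i < VB i)
        = (Finset.univ.filter fun i => ¬ VB i < VA i) := by
      apply Finset.filter_congr
      intro i _
      constructor
      · intro h; exact not_lt.mpr h.le
      · intro h; exact lt_of_le_of_ne (not_lt.mp h) (hnotie i)
    rw [this, Finset.card_filter_add_card_filter_not]
    simp
  set t : ℕ := (Finset.univ.filter fun i => VA i < VB i).card with ht
  -- compute WA and WB
  have hWA : WA = a - s * c := by
    show (∑ i, (if VB i < VA i then VA i - c else VA i)) = a - s * c
    have : ∀ i : Fin n, (if VB i < VA i then VA i - c else VA i)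
        = VA i - (if VB i < VA i then c else 0) := by
      intro i; split <;> simp
    rw [Finset.sum_congr rfl (fun i _ => this i), Finset.sum_sub_distrib,
      ← Finset.sum_filter, Finset.sum_const, nsmul_eq_mul]
  have hWB : WB = b - t * c := by
    show (∑ i, (if VA i < VB i then VB i - c else VB i)) = b - t * c
    have : ∀ i : Fin n, (if VA i < VB i then VB i - c else VB i)
        = VB i - (if VA i < VB i then c else 0) := by
      intro i; split <;> simp
    rw [Finset.sum_congr rfl (fun i _ => this i), Finset.sum_sub_distrib,
      ← Finset.sum_filter, Finset.sum_const, nsmul_eq_mul]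
  have htval : (t : ℝ) = n - s := by
    have := hcards
    have : (s : ℝ) + t = n := by exact_mod_cast congrArg (Nat.cast : ℕ → ℝ) this
    linarith
  have hbval : b = V - a := by linarith
  have hane : a ≠ 0 := ne_of_gt hApos
  have hbne : b ≠ 0 := ne_of_gt hBpos
  have hVne : V ≠ 0 := ne_of_gt hV
  have hnne : (n:ℝ) ≠ 0 := ne_of_gt hnR
  -- main equivalence
  show REG = 0 ↔ Sm = Vm
  have hREG : REG = WB / b - WA / a := rfl
  have hSm : Sm = (s : ℝ) / n - 1 / 2 := rfl
  have hVm : Vm = a / V - 1 / 2 := rfl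
  rw [hREG, hWA, hWB, htval, hbval, hSm, hVm, sub_eq_zero,
    div_eq_div_iff (hbval ▸ hbne) hane]
  constructor
  · intro h
    have h3 : c * ((s:ℝ) * V - n * a) = 0 := by linear_combination h
    have key : (s:ℝ) * V = n * a := by
      rcases mul_eq_zero.mp h3 with h' | h'
      · exact absurd h' (ne_of_gt hcpos)
      · linarith
    rw [sub_left_inj, div_eq_div_iff hnne hVne]
    linarith
  · intro h
    rw [sub_left_inj, div_eq_div_iff hnne hVne] at h
    have key : (s:ℝ) * V = n * a := by linarith
    linear_combination c * key
end

section
/- Under equal turnout, the relative efficiency gap satisfies REG_λ = (S_m - (λ + (1-λ)·C)·V_m) / (2·(1/2 + V_m)·(1/2 - V_m)), where C is the mean competitiveness over all districts. -/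
lemma reg_key (lam v A B c d S N : ℝ) (hv : 0 < v) (hN : 0 < N)
    (h1 : A + c = S * v) (h2 : B + d = (N - S) * v)
    (hAB : 0 < A + B) (hcd : 0 < c + d) :
    (lam * (d - (N - S) * v / 2) + c) / (c + d) - (lam * (A - S * v / 2) + B) / (A + B)
      = ((S / N - 1 / 2) - (lam + (1 - lam) * (((A - c) + (d - B)) / v / N)) * ((A + B) / (N * v) - 1 / 2))
        / (2 * (1 / 2 + ((A + B) / (N * v) - 1 / 2)) * (1 / 2 - ((A + B) / (N * v) - 1 / 2))) := by
  have hc : c = S * v - A := by linarith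
  have hd : d = (N - S) * v - B := by linarith
  subst hc hd
  have hNv : 0 < N * v := by positivity
  have h3 : (1 / 2 : ℝ) + ((A + B) / (N * v) - 1 / 2) ≠ 0 := by
    have : (A + B) / (N * v) > 0 := by positivity
    linarith
  have h4 : (1 / 2 : ℝ) - ((A + B) / (N * v) - 1 / 2) ≠ 0 := by
    have heq : (1/2:ℝ) - ((A + B) / (N * v) - 1/2) = (S * v - A + ((N - S) * v - B)) / (N * v) := by
      field_simp; linarith
    rw [heq]
    positivity
  have hden : 2 * ((1:ℝ) / 2 + ((A + B) / (N * v) - 1 / 2)) * (1 / 2 - ((A + B) / (N * v) - 1 / 2)) ≠ 0 :=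
    mul_ne_zero (mul_ne_zero two_ne_zero h3) h4
  rw [eq_div_iff hden]
  field_simp
  ring

/-- Cover's global formula for the relative efficiency gap: under equal
turnout, `REG_λ = (S_m - (λ + (1-λ)·C)·V_m) / (2·(1/2 + V_m)·(1/2 - V_m))`,
where `C` is the mean competitiveness over all districts. -/
theorem relative_efficiency_gap_formula
    (n : ℕ) (hn : 0 < n) (V : ℝ) (hV : 0 < V) (lam : ℝ) (hlam : 0 < lam)
    (VA VB : Fin n → ℝ)
    (hnonnegA : ∀ i, 0 ≤ VA i) (hnonnegB : ∀ i, 0 ≤ VB i)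
    (hturnout : ∀ i, VA i + VB i = V / n)
    (hnotie : ∀ i, VA i ≠ VB i)
    (hApos : 0 < ∑ i, VA i) (hBpos : 0 < ∑ i, VB i) :
    let WA : ℝ := ∑ i, (if VB i < VA i then lam * (VA i - V / n / 2) else VA i)
    let WB : ℝ := ∑ i, (if VA i < VB i then lam * (VB i - V / n / 2) else VB i)
    let REG : ℝ := WB / (∑ i, VB i) - WA / (∑ i, VA i)
    let Sm : ℝ := ((Finset.univ.filter fun i => VB i < VA i).card : ℝ) / n - 1 / 2
    let Vm : ℝ := (∑ i, VA i) / V - 1 / 2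
    let C : ℝ := (∑ i, |VA i - VB i| / (V / n)) / n
    REG = (Sm - (lam + (1 - lam) * C) * Vm) / (2 * (1 / 2 + Vm) * (1 / 2 - Vm)) := by
  dsimp only
  have hn' : (0:ℝ) < (n:ℝ) := by exact_mod_cast hn
  set v : ℝ := V / n with hvdef
  have hv : 0 < v := by positivity
  have hVnv : V = (n:ℝ) * v := by
    rw [hvdef]; field_simp
  classical
  have hiff : ∀ i, VA i < VB i ↔ ¬ VB i < VA i := fun i =>
    ⟨fun h => not_lt.mpr h.le, fun h => (not_lt.mp h).lt_of_ne (hnotie i)⟩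
  have hiff2 : ∀ i, VB i < VA i ↔ ¬ VA i < VB i := fun i =>
    ⟨fun h => not_lt.mpr h.le, fun h => (not_lt.mp h).lt_of_ne (hnotie i).symm⟩
  set Af := Finset.univ.filter (fun i => VB i < VA i) with hAf
  set Bf := Finset.univ.filter (fun i : Fin n => ¬ VB i < VA i) with hBf
  have hBfalt : Finset.univ.filter (fun i => VA i < VB i) = Bf := by
    ext i; simp [hBf, hiff i]
  have hAfalt : Finset.univ.filter (fun i : Fin n => ¬ VA i < VB i) = Af := by
    ext i; simp [hAf, hiff2 i]
  set a := ∑ i ∈ Af, VA i with ha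
  set b := ∑ i ∈ Bf, VA i with hb
  set cA := ∑ i ∈ Af, VB i with hcA
  set d := ∑ i ∈ Bf, VB i with hd
  set S := ((Af.card : ℕ) : ℝ) with hS
  -- cardinalities
  have hcards : ((Af.card : ℝ)) + (Bf.card : ℝ) = (n : ℝ) := by
    have := Finset.card_filter_add_card_filter_not
      (s := (Finset.univ : Finset (Fin n))) (p := fun i => VB i < VA i)
    rw [Finset.card_univ, Fintype.card_fin] at this
    exact_mod_cast this
  -- split total sums
  have hsplitA : (∑ i, VA i) = a + b :=
    (Finset.sum_filter_add_sum_filter_not Finset.univ (fun i => VB i < VA i) VA).symm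
  have hsplitB : (∑ i, VB i) = cA + d :=
    (Finset.sum_filter_add_sum_filter_not Finset.univ (fun i => VB i < VA i) VB).symm
  -- turnout constraints
  have h1 : a + cA = S * v := by
    have e : ∑ i ∈ Af, (VA i + VB i) = ∑ i ∈ Af, v :=
      Finset.sum_congr rfl fun i _ => hturnout i
    rw [Finset.sum_add_distrib, Finset.sum_const, nsmul_eq_mul] at e
    exact e
  have h2 : b + d = ((n:ℝ) - S) * v := by
    have e : ∑ i ∈ Bf, (VA i + VB i) = ∑ i ∈ Bf, v :=
      Finset.sum_congr rfl fun i _ => hturnout i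
    rw [Finset.sum_add_distrib, Finset.sum_const, nsmul_eq_mul] at e
    have : ((Bf.card : ℕ) : ℝ) = (n:ℝ) - S := by rw [hS]; linarith
    rw [this] at e
    exact e
  -- wasted votes sums
  have hWA : (∑ i, if VB i < VA i then lam * (VA i - v / 2) else VA i)
      = lam * (a - S * v / 2) + b := by
    rw [Finset.sum_ite]
    congr 1
    rw [← Finset.mul_sum, Finset.sum_sub_distrib, Finset.sum_const, nsmul_eq_mul]
    ring
  have hWB : (∑ i, if VA i < VB i then lam * (VB i - v / 2) else VB i)
      = lam * (d - ((n:ℝ) - S) * v / 2) + cA := by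
    rw [Finset.sum_ite, hBfalt, hAfalt]
    congr 1
    · rw [← Finset.mul_sum, Finset.sum_sub_distrib, Finset.sum_const, nsmul_eq_mul]
      have : ((Bf.card : ℕ) : ℝ) = (n:ℝ) - S := by rw [hS]; linarith
      rw [this]; ring
  -- competitiveness sum
  have hCsum : (∑ i, |VA i - VB i| / v) = (a - cA + (d - b)) / v := by
    rw [← Finset.sum_div]
    congr 1
    rw [← Finset.sum_filter_add_sum_filter_not Finset.univ (fun i => VB i < VA i)
      (fun i => |VA i - VB i|)]
    have e1 : ∑ i ∈ Af, |VA i - VB i| = a - cA := by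
      rw [Finset.sum_congr rfl (fun i hi => abs_of_pos (sub_pos.mpr (Finset.mem_filter.mp hi).2)),
        Finset.sum_sub_distrib]
    have e2 : ∑ i ∈ Bf, |VA i - VB i| = d - b := by
      have : ∀ i ∈ Bf, |VA i - VB i| = VB i - VA i := by
        intro i hi
        have hlt : VA i < VB i := (hiff i).mpr (Finset.mem_filter.mp hi).2
        rw [abs_of_neg (sub_neg.mpr hlt)]; ring
      rw [Finset.sum_congr rfl this, Finset.sum_sub_distrib]
    rw [e1, e2]
  rw [hWA, hWB, hsplitA, hsplitB, hCsum, hVnv]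
  rw [hsplitA] at hApos
  rw [hsplitB] at hBpos
  exact reg_key lam v a b cA d S (n:ℝ) hv hn' h1 h2 hApos hBpos
end

section
/- Under equal turnout, REG_2 = 0 if and only if S_m = (2 - C)·V_m, where C is mean competitiveness; thus the λ=2 relative efficiency gap vanishing interpolates between proportionality (C = 1) and the winner's double bonus (C = 0). -/
/-- Under equal turnout, `REG_2 = 0` if and only if `S_m = (2 - C) * V_m`:
the λ = 2 relative efficiency gap vanishing interpolates between
proportionality (C = 1) and the winner's double bonus (C = 0). -/
theorem relative_efficiency_gap_two_vanishes_iff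
    (n : ℕ) (hn : 0 < n) (V : ℝ) (hV : 0 < V)
    (VA VB : Fin n → ℝ)
    (hnonnegA : ∀ i, 0 ≤ VA i) (hnonnegB : ∀ i, 0 ≤ VB i)
    (hturnout : ∀ i, VA i + VB i = V / n)
    (hnotie : ∀ i, VA i ≠ VB i)
    (hApos : 0 < ∑ i, VA i) (hBpos : 0 < ∑ i, VB i) :
    let WA : ℝ := ∑ i, (if VB i < VA i then 2 * (VA i - V / n / 2) else VA i)
    let WB : ℝ := ∑ i, (if VA i < VB i then 2 * (VB i - V / n / 2) else VB i)
    let REG : ℝ := WB / (∑ i, VB i) - WA / (∑ i, VA i)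
    let Sm : ℝ := ((Finset.univ.filter fun i => VB i < VA i).card : ℝ) / n - 1 / 2
    let Vm : ℝ := (∑ i, VA i) / V - 1 / 2
    let C : ℝ := (∑ i, |VA i - VB i| / (V / n)) / n
    (REG = 0 ↔ Sm = (2 - C) * Vm) := by
  intro WA WB REG Sm Vm C
  have hncast : (0:ℝ) < (n:ℝ) := by exact_mod_cast hn
  have hnne : (n:ℝ) ≠ 0 := ne_of_gt hncast
  have hVne : V ≠ 0 := ne_of_gt hV
  set t : ℝ := V / n with ht
  set TA : ℝ := ∑ i, VA i with hTA
  set TB : ℝ := ∑ i, VB i with hTB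
  set X : ℝ := ∑ i, (if VB i < VA i then VB i else 0) with hX
  set Y : ℝ := ∑ i, (if VA i < VB i then VA i else 0) with hY
  set SA : ℝ := ((Finset.univ.filter fun i => VB i < VA i).card : ℝ) with hSA
  have hTV : TA + TB = V := by
    rw [hTA, hTB, ← Finset.sum_add_distrib]
    have : ∀ i : Fin n, VA i + VB i = t := hturnout
    rw [Finset.sum_congr rfl fun i _ => this i, Finset.sum_const, Finset.card_univ,
      Fintype.card_fin, nsmul_eq_mul, ht]
    field_simp
  have hWA : WA = TA - X := by
    rw [hTA, hX, ← Finset.sum_sub_distrib]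
    refine Finset.sum_congr rfl fun i _ => ?_
    by_cases h : VB i < VA i
    · simp only [if_pos h]
      have := hturnout i
      rw [ht] at *
      linarith
    · simp [if_neg h]
  have hWB : WB = TB - Y := by
    rw [hTB, hY, ← Finset.sum_sub_distrib]
    refine Finset.sum_congr rfl fun i _ => ?_
    by_cases h : VA i < VB i
    · simp only [if_pos h]
      have := hturnout i
      rw [ht] at *
      linarith
    · simp [if_neg h]
  have hCeq : C = (V - 2*X - 2*Y) / V := by
    have hD : ∑ i, |VA i - VB i| = V - 2*X - 2*Y := by
      have : ∀ i : Fin n, |VA i - VB i|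
          = t - 2 * (if VB i < VA i then VB i else 0)
            - 2 * (if VA i < VB i then VA i else 0) := by
        intro i
        have hti := hturnout i
        rcases lt_or_gt_of_ne (hnotie i) with h | h
        · rw [abs_of_neg (by linarith), if_neg (not_lt.mpr h.le), if_pos h]
          linarith
        · rw [abs_of_pos (by linarith), if_pos h, if_neg (not_lt.mpr h.le)]
          linarith
      rw [Finset.sum_congr rfl fun i _ => this i]
      rw [Finset.sum_sub_distrib, Finset.sum_sub_distrib, ← Finset.mul_sum,
        ← Finset.mul_sum, Finset.sum_const, Finset.card_univ, Fintype.card_fin,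
        nsmul_eq_mul, ht, ← hX, ← hY]
      field_simp
    show (∑ i, |VA i - VB i| / (V / n)) / n = _
    rw [← Finset.sum_div, hD, ← ht]
    have htne : t ≠ 0 := ne_of_gt (div_pos hV hncast)
    field_simp [ht]
    have htn : t * n = V := by rw [ht, div_mul_cancel₀ V hnne]
    linear_combination (2*X + 2*Y - V) * htn
  have hTAeq : TA = SA * t - X + Y := by
    have : ∀ i : Fin n, VA i
        = (if VB i < VA i then t else 0)
          - (if VB i < VA i then VB i else 0)
          + (if VA i < VB i then VA i else 0) := by
      intro i
      have hti := hturnout i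
      rcases lt_or_gt_of_ne (hnotie i) with h | h
      · rw [if_neg (not_lt.mpr h.le), if_neg (not_lt.mpr h.le), if_pos h]; ring
      · rw [if_pos h, if_pos h, if_neg (not_lt.mpr h.le)]; linarith
    rw [hTA, Finset.sum_congr rfl fun i _ => this i, Finset.sum_add_distrib,
      Finset.sum_sub_distrib, ← hX, ← hY]
    congr 1
    congr 1
    rw [← Finset.sum_filter, Finset.sum_const, nsmul_eq_mul, hSA]
  have hkey : V^2 * (Sm - (2 - C)*Vm) = 2 * ((TB - Y) * TA - (TA - X) * TB) := by
    have hTBeq : TB = V - TA := by linarith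
    rw [hCeq]
    show V^2 * ((SA / n - 1/2) - (2 - (V - 2*X - 2*Y)/V) * (TA / V - 1/2)) = _
    rw [hTBeq, hTAeq, ht]
    field_simp
    ring
  have hTAne : TA ≠ 0 := ne_of_gt hApos
  have hTBne : TB ≠ 0 := ne_of_gt hBpos
  have hREG : REG = WB / TB - WA / TA := rfl
  rw [hREG, hWA, hWB, sub_eq_zero, div_eq_div_iff hTBne hTAne]
  constructor
  · intro h
    have : V^2 * (Sm - (2 - C)*Vm) = 0 := by rw [hkey]; linarith
    have h2 : Sm - (2 - C)*Vm = 0 := by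
      have := mul_eq_zero.mp this
      rcases this with h' | h'
      · exact absurd h' (pow_ne_zero 2 hVne)
      · exact h'
    linarith
  · intro h
    have h0 : Sm - (2 - C)*Vm = 0 := by linarith
    have : 2 * ((TB - Y) * TA - (TA - X) * TB) = 0 := by rw [← hkey, h0]; ring
    linarith
end

section
/- Under equal turnout, EG_0 = S_m − V_m: if wasted votes count only losing votes (λ = 0), the efficiency gap vanishes exactly at proportionality. -/
/-- Under equal turnout, if wasted votes count only losing votes (λ = 0),
then `EG_0 = S_m - V_m`: the efficiency gap vanishes exactly at
proportionality. -/
theorem efficiency_gap_zero_weight_formula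
    (n : ℕ) (hn : 0 < n) (V : ℝ) (hV : 0 < V)
    (VA VB : Fin n → ℝ)
    (hnonnegA : ∀ i, 0 ≤ VA i) (hnonnegB : ∀ i, 0 ≤ VB i)
    (hturnout : ∀ i, VA i + VB i = V / n)
    (hnotie : ∀ i, VA i ≠ VB i) :
    let WA : ℝ := ∑ i, (if VB i < VA i then 0 else VA i)
    let WB : ℝ := ∑ i, (if VA i < VB i then 0 else VB i)
    let Sm : ℝ := ((Finset.univ.filter fun i => VB i < VA i).card : ℝ) / n - 1 / 2
    let Vm : ℝ := (∑ i, VA i) / V - 1 / 2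
    (WB - WA) / V = Sm - Vm := by
  intro WA WB Sm Vm
  have hn' : (n : ℝ) ≠ 0 := Nat.cast_ne_zero.mpr hn.ne'
  have key : WB - WA =
      (∑ i, (if VB i < VA i then V / n else 0)) - ∑ i, VA i := by
    simp only [WA, WB, ← Finset.sum_sub_distrib]
    refine Finset.sum_congr rfl fun i _ => ?_
    rcases lt_or_gt_of_ne (hnotie i) with h | h
    · simp [h, not_lt.mpr h.le]
    · rw [if_neg (not_lt.mpr h.le), if_pos h, if_pos h]
      have := hturnout i; linarith
  have hsum : (∑ i, (if VB i < VA i then V / n else (0:ℝ))) =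
      ((Finset.univ.filter fun i => VB i < VA i).card : ℝ) * (V / n) := by
    rw [← Finset.sum_filter, Finset.sum_const, nsmul_eq_mul]
  rw [key, hsum]
  show _ = Sm - Vm
  simp only [Sm, Vm]
  field_simp
  ring
end
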